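/- In the quotient ring ℤ[x_1,x_2,x_3]/I_3 where I_3 = (e_1, e_2, e_3) is generated by the elementary symmetric polynomials, the images of the six Schubert polynomials 1, x_1, x_1+x_2, x_1², x_1x_2, x_1²x_2 form a ℤ-basis. -/
import Mathlib

open MvPolynomial

/-! ### A concrete model of the coinvariant algebra -/

def A6 : Type := Fin 6 → ℤ

instance : AddCommGroup A6 := inferInstanceAs (AddCommGroup (Fin 6 → ℤ))
instance : DecidableEq A6 := inferInstanceAs (DecidableEq (Fin 6 → ℤ))

def A6.mul (a b : A6) : A6 := fun i =>
  match i with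
  | 0 => a 0 * b 0
  | 1 => a 0 * b 1 + a 1 * b 0
  | 2 => a 0 * b 2 + a 2 * b 0
  | 3 => a 0 * b 3 + a 3 * b 0 + a 1 * b 1 - a 2 * b 2
  | 4 => a 0 * b 4 + a 4 * b 0 + a 1 * b 2 + a 2 * b 1 - a 2 * b 2
  | 5 => a 0 * b 5 + a 5 * b 0 + a 1 * b 4 + a 4 * b 1 + a 2 * b 3 + a 3 * b 2
      - a 2 * b 4 - a 4 * b 2

instance : Mul A6 := ⟨A6.mul⟩
instance : One A6 := ⟨fun i => match i with | 0 => 1 | _ => 0⟩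

namespace A6

@[simp] lemma mul_app0 (a b : A6) : (a * b) 0 = a 0 * b 0 := rfl
@[simp] lemma mul_app1 (a b : A6) : (a * b) 1 = a 0 * b 1 + a 1 * b 0 := rfl
@[simp] lemma mul_app2 (a b : A6) : (a * b) 2 = a 0 * b 2 + a 2 * b 0 := rfl
@[simp] lemma mul_app3 (a b : A6) : (a * b) 3 = a 0 * b 3 + a 3 * b 0 + a 1 * b 1 - a 2 * b 2 := rfl
@[simp] lemma mul_app4 (a b : A6) :
    (a * b) 4 = a 0 * b 4 + a 4 * b 0 + a 1 * b 2 + a 2 * b 1 - a 2 * b 2 := rfl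
@[simp] lemma mul_app5 (a b : A6) :
    (a * b) 5 = a 0 * b 5 + a 5 * b 0 + a 1 * b 4 + a 4 * b 1 + a 2 * b 3 + a 3 * b 2
      - a 2 * b 4 - a 4 * b 2 := rfl
@[simp] lemma add_app (a b : A6) (i : Fin 6) : (a + b) i = a i + b i := rfl
@[simp] lemma neg_app (a : A6) (i : Fin 6) : (-a) i = -(a i) := rfl
@[simp] lemma zero_app (i : Fin 6) : (0 : A6) i = 0 := rfl
@[simp] lemma one_app0 : (1 : A6) 0 = 1 := rfl
@[simp] lemma one_app1 : (1 : A6) 1 = 0 := rfl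
@[simp] lemma one_app2 : (1 : A6) 2 = 0 := rfl
@[simp] lemma one_app3 : (1 : A6) 3 = 0 := rfl
@[simp] lemma one_app4 : (1 : A6) 4 = 0 := rfl
@[simp] lemma one_app5 : (1 : A6) 5 = 0 := rfl

lemma ext6 {a b : A6} (h0 : a 0 = b 0) (h1 : a 1 = b 1) (h2 : a 2 = b 2)
    (h3 : a 3 = b 3) (h4 : a 4 = b 4) (h5 : a 5 = b 5) : a = b := by
  funext i
  fin_cases i <;> assumption

end A6

instance : CommRing A6 := {
  (inferInstance : AddCommGroup A6) with
  mul_assoc := fun a b c => A6.ext6 (by simp; ring) (by simp; ring) (by simp; ring)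
    (by simp; ring) (by simp; ring) (by simp; ring)
  one_mul := fun a => A6.ext6 (by simp) (by simp) (by simp) (by simp) (by simp) (by simp)
  mul_one := fun a => A6.ext6 (by simp) (by simp) (by simp) (by simp) (by simp) (by simp)
  left_distrib := fun a b c => A6.ext6 (by simp; ring) (by simp; ring) (by simp; ring)
    (by simp; ring) (by simp; ring) (by simp; ring)
  right_distrib := fun a b c => A6.ext6 (by simp; ring) (by simp; ring) (by simp; ring)
    (by simp; ring) (by simp; ring) (by simp; ring)
  zero_mul := fun a => A6.ext6 (by simp) (by simp) (by simp) (by simp) (by simp) (by simp)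
  mul_zero := fun a => A6.ext6 (by simp) (by simp) (by simp) (by simp) (by simp) (by simp)
  mul_comm := fun a b => A6.ext6 (by simp; ring) (by simp; ring) (by simp; ring)
    (by simp; ring) (by simp; ring) (by simp; ring) }

def A6.u : A6 := fun i => match i with | 1 => 1 | _ => 0
def A6.v : A6 := fun i => match i with | 2 => 1 | _ => 0

@[simp] lemma A6.smul_app (c : ℤ) (a : A6) (i : Fin 6) : (c • a) i = c * a i := by
  show c • a i = c * a i
  exact zsmul_eq_mul (a i) c

/-! ### The ideal and the Schubert polynomials -/

/-- The ideal `I_3 ⊂ ℤ[x_1,x_2,x_3]` generated by the elementary symmetric polynomials. -/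
noncomputable def I3 : Ideal (MvPolynomial (Fin 3) ℤ) :=
  Ideal.span {esymm (Fin 3) ℤ 1, esymm (Fin 3) ℤ 2, esymm (Fin 3) ℤ 3}

/-- The six Schubert polynomials for `S_3`: `1, x_1, x_1+x_2, x_1², x_1x_2, x_1²x_2`. -/
noncomputable def schubert3 : Fin 6 → MvPolynomial (Fin 3) ℤ :=
  ![1, X 0, X 0 + X 1, X 0 ^ 2, X 0 * X 1, X 0 ^ 2 * X 1]

lemma hE1 : esymm (Fin 3) ℤ 1 = X 0 + X 1 + X 2 := by
  simp [esymm_one, Fin.sum_univ_succ]; ring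

lemma hE2 : esymm (Fin 3) ℤ 2 = X 0 * X 1 + X 0 * X 2 + X 1 * X 2 := by
  rw [esymm, show (Finset.powersetCard 2 (Finset.univ : Finset (Fin 3))) =
    {{0,1},{0,2},{1,2}} from by decide]
  rw [show ({{0,1},{0,2},{1,2}} : Finset (Finset (Fin 3))) =
    insert {0,1} (insert {0,2} {({1,2} : Finset (Fin 3))}) from rfl]
  rw [Finset.sum_insert (by decide), Finset.sum_insert (by decide), Finset.sum_singleton]
  rw [show ({0,1} : Finset (Fin 3)) = insert 0 {1} from rfl,
      show ({0,2} : Finset (Fin 3)) = insert 0 {2} from rfl,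
      show ({1,2} : Finset (Fin 3)) = insert 1 {2} from rfl]
  rw [Finset.prod_insert (by decide), Finset.prod_insert (by decide),
      Finset.prod_insert (by decide)]
  simp [Finset.prod_singleton]
  ring

lemma hE3 : esymm (Fin 3) ℤ 3 = X 0 * X 1 * X 2 := by
  rw [esymm, show (Finset.powersetCard 3 (Finset.univ : Finset (Fin 3))) =
    {{0,1,2}} from by decide, Finset.sum_singleton,
    show ({0,1,2} : Finset (Fin 3)) = insert 0 (insert 1 {2}) from rfl,
    Finset.prod_insert (by decide), Finset.prod_insert (by decide), Finset.prod_singleton,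
    mul_assoc]

lemma memI3 (d p q r : MvPolynomial (Fin 3) ℤ)
    (h : d = p * (X 0 + X 1 + X 2) + q * (X 0 * X 1 + X 0 * X 2 + X 1 * X 2)
      + r * (X 0 * X 1 * X 2)) : d ∈ I3 := by
  rw [h, I3]
  refine add_mem (add_mem ?_ ?_) ?_ <;>
    refine Ideal.mul_mem_left _ _ (Ideal.subset_span ?_)
  · rw [← hE1]; simp
  · rw [← hE2]; simp
  · rw [← hE3]; simp

lemma qeq (a b p q r : MvPolynomial (Fin 3) ℤ)
    (h : a - b = p * (X 0 + X 1 + X 2) + q * (X 0 * X 1 + X 0 * X 2 + X 1 * X 2)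
      + r * (X 0 * X 1 * X 2)) :
    Ideal.Quotient.mk I3 a = Ideal.Quotient.mk I3 b :=
  Ideal.Quotient.eq.mpr (memI3 _ p q r h)

/-! ### Evaluation into the model -/

namespace A6

@[simp] lemma sub_app (a b : A6) (i : Fin 6) : (a - b) i = a i - b i := rfl
@[simp] lemma u_app0 : A6.u 0 = 0 := rfl
@[simp] lemma u_app1 : A6.u 1 = 1 := rfl
@[simp] lemma u_app2 : A6.u 2 = 0 := rfl
@[simp] lemma u_app3 : A6.u 3 = 0 := rfl
@[simp] lemma u_app4 : A6.u 4 = 0 := rfl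
@[simp] lemma u_app5 : A6.u 5 = 0 := rfl
@[simp] lemma v_app0 : A6.v 0 = 0 := rfl
@[simp] lemma v_app1 : A6.v 1 = 0 := rfl
@[simp] lemma v_app2 : A6.v 2 = 1 := rfl
@[simp] lemma v_app3 : A6.v 3 = 0 := rfl
@[simp] lemma v_app4 : A6.v 4 = 0 := rfl
@[simp] lemma v_app5 : A6.v 5 = 0 := rfl

end A6

@[simp] lemma A6.intCast_app (n : ℤ) (i : Fin 6) : ((n : A6)) i = n * (1 : A6) i := by
  rw [show ((n : A6)) = (n : ℤ) • (1 : A6) by rw [zsmul_eq_mul, mul_one]]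
  exact A6.smul_app n 1 i

noncomputable def phi : MvPolynomial (Fin 3) ℤ →ₐ[ℤ] A6 :=
  aeval ![A6.u, A6.v, -A6.u - A6.v]

@[simp] lemma phi_X0 : phi (X 0) = A6.u := by simp [phi]
@[simp] lemma phi_X1 : phi (X 1) = A6.v := by simp [phi]
@[simp] lemma phi_X2 : phi (X 2) = -A6.u - A6.v := by
  rw [phi, aeval_X]; rfl

lemma phi_ker : ∀ a ∈ I3, phi a = 0 := by
  intro a ha
  rw [I3] at ha
  have hle : ({esymm (Fin 3) ℤ 1, esymm (Fin 3) ℤ 2, esymm (Fin 3) ℤ 3} : Set _)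
      ⊆ ↑(RingHom.ker phi.toRingHom) := by
    rintro x (rfl | rfl | rfl) <;>
      simp only [SetLike.mem_coe, RingHom.mem_ker, AlgHom.toRingHom_eq_coe,
        RingHom.coe_coe, hE1, hE2, hE3, map_add, map_mul, phi_X0, phi_X1, phi_X2] <;>
      refine A6.ext6 ?_ ?_ ?_ ?_ ?_ ?_ <;> simp <;> ring
  have := (Ideal.span_le).mpr hle
  exact this ha

lemma indep_phi :
    LinearIndependent ℤ (fun j => phi (schubert3 j)) := by
  rw [Fintype.linearIndependent_iff]
  intro c hc
  rw [Fin.sum_univ_six] at hc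
  simp only [show schubert3 0 = 1 from rfl, show schubert3 1 = X 0 from rfl,
    show schubert3 2 = X 0 + X 1 from rfl, show schubert3 3 = X 0 ^ 2 from rfl,
    show schubert3 4 = X 0 * X 1 from rfl, show schubert3 5 = X 0 ^ 2 * X 1 from rfl,
    map_one, map_add, map_mul, map_pow, pow_two, phi_X0, phi_X1] at hc
  have h0 := congrFun hc 0
  have h1 := congrFun hc 1
  have h2 := congrFun hc 2
  have h3 := congrFun hc 3
  have h4 := congrFun hc 4
  have h5 := congrFun hc 5
  simp at h0 h1 h2 h3 h4 h5
  intro i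
  fin_cases i <;> simp <;> omega

/-! ### Spanning -/

lemma s3_0 : schubert3 0 = 1 := rfl
lemma s3_1 : schubert3 1 = X 0 := rfl
lemma s3_2 : schubert3 2 = X 0 + X 1 := rfl
lemma s3_3 : schubert3 3 = X 0 ^ 2 := rfl
lemma s3_4 : schubert3 4 = X 0 * X 1 := rfl
lemma s3_5 : schubert3 5 = X 0 ^ 2 * X 1 := rfl

lemma q00 :
    Ideal.Quotient.mk I3 (schubert3 0 * X 0) ∈
      Submodule.span ℤ (Set.range fun k => Ideal.Quotient.mk I3 (schubert3 k)) := by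
  have hf : ∀ k : Fin 6, Ideal.Quotient.mk I3 (schubert3 k) ∈
      Submodule.span ℤ (Set.range fun k => Ideal.Quotient.mk I3 (schubert3 k)) :=
    fun k => Submodule.subset_span ⟨k, rfl⟩
  rw [qeq _ (X 0) 0 0 0 (by simp only [s3_0, s3_1, s3_2, s3_3, s3_4, s3_5]; ring)]
  exact hf 1

lemma q10 :
    Ideal.Quotient.mk I3 (schubert3 1 * X 0) ∈
      Submodule.span ℤ (Set.range fun k => Ideal.Quotient.mk I3 (schubert3 k)) := by
  have hf : ∀ k : Fin 6, Ideal.Quotient.mk I3 (schubert3 k) ∈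
      Submodule.span ℤ (Set.range fun k => Ideal.Quotient.mk I3 (schubert3 k)) :=
    fun k => Submodule.subset_span ⟨k, rfl⟩
  rw [qeq _ (X 0 ^ 2) 0 0 0 (by simp only [s3_0, s3_1, s3_2, s3_3, s3_4, s3_5]; ring)]
  exact hf 3

lemma q20 :
    Ideal.Quotient.mk I3 (schubert3 2 * X 0) ∈
      Submodule.span ℤ (Set.range fun k => Ideal.Quotient.mk I3 (schubert3 k)) := by
  have hf : ∀ k : Fin 6, Ideal.Quotient.mk I3 (schubert3 k) ∈
      Submodule.span ℤ (Set.range fun k => Ideal.Quotient.mk I3 (schubert3 k)) :=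
    fun k => Submodule.subset_span ⟨k, rfl⟩
  rw [qeq _ (X 0 ^ 2 + X 0 * X 1) 0 0 0 (by simp only [s3_0, s3_1, s3_2, s3_3, s3_4, s3_5]; ring)]
  rw [map_add]; exact add_mem (hf 3) (hf 4)

lemma q30 :
    Ideal.Quotient.mk I3 (schubert3 3 * X 0) ∈
      Submodule.span ℤ (Set.range fun k => Ideal.Quotient.mk I3 (schubert3 k)) := by
  have hf : ∀ k : Fin 6, Ideal.Quotient.mk I3 (schubert3 k) ∈
      Submodule.span ℤ (Set.range fun k => Ideal.Quotient.mk I3 (schubert3 k)) :=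
    fun k => Submodule.subset_span ⟨k, rfl⟩
  rw [qeq _ 0 (X 0 ^ 2) (-(X 0)) 1 (by simp only [s3_0, s3_1, s3_2, s3_3, s3_4, s3_5]; ring)]
  rw [map_zero]; exact zero_mem _

lemma q40 :
    Ideal.Quotient.mk I3 (schubert3 4 * X 0) ∈
      Submodule.span ℤ (Set.range fun k => Ideal.Quotient.mk I3 (schubert3 k)) := by
  have hf : ∀ k : Fin 6, Ideal.Quotient.mk I3 (schubert3 k) ∈
      Submodule.span ℤ (Set.range fun k => Ideal.Quotient.mk I3 (schubert3 k)) :=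
    fun k => Submodule.subset_span ⟨k, rfl⟩
  rw [qeq _ (X 0 ^ 2 * X 1) 0 0 0 (by simp only [s3_0, s3_1, s3_2, s3_3, s3_4, s3_5]; ring)]
  exact hf 5

lemma q50 :
    Ideal.Quotient.mk I3 (schubert3 5 * X 0) ∈
      Submodule.span ℤ (Set.range fun k => Ideal.Quotient.mk I3 (schubert3 k)) := by
  have hf : ∀ k : Fin 6, Ideal.Quotient.mk I3 (schubert3 k) ∈
      Submodule.span ℤ (Set.range fun k => Ideal.Quotient.mk I3 (schubert3 k)) :=
    fun k => Submodule.subset_span ⟨k, rfl⟩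
  rw [qeq _ 0 (X 0 ^ 2 * X 1) (-(X 0 * X 1)) (X 1) (by simp only [s3_0, s3_1, s3_2, s3_3, s3_4, s3_5]; ring)]
  rw [map_zero]; exact zero_mem _

lemma q01 :
    Ideal.Quotient.mk I3 (schubert3 0 * X 1) ∈
      Submodule.span ℤ (Set.range fun k => Ideal.Quotient.mk I3 (schubert3 k)) := by
  have hf : ∀ k : Fin 6, Ideal.Quotient.mk I3 (schubert3 k) ∈
      Submodule.span ℤ (Set.range fun k => Ideal.Quotient.mk I3 (schubert3 k)) :=
    fun k => Submodule.subset_span ⟨k, rfl⟩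
  rw [qeq _ ((X 0 + X 1) - X 0) 0 0 0 (by simp only [s3_0, s3_1, s3_2, s3_3, s3_4, s3_5]; ring)]
  rw [map_sub]; exact sub_mem (hf 2) (hf 1)

lemma q11 :
    Ideal.Quotient.mk I3 (schubert3 1 * X 1) ∈
      Submodule.span ℤ (Set.range fun k => Ideal.Quotient.mk I3 (schubert3 k)) := by
  have hf : ∀ k : Fin 6, Ideal.Quotient.mk I3 (schubert3 k) ∈
      Submodule.span ℤ (Set.range fun k => Ideal.Quotient.mk I3 (schubert3 k)) :=
    fun k => Submodule.subset_span ⟨k, rfl⟩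
  rw [qeq _ (X 0 * X 1) 0 0 0 (by simp only [s3_0, s3_1, s3_2, s3_3, s3_4, s3_5]; ring)]
  exact hf 4

lemma q21 :
    Ideal.Quotient.mk I3 (schubert3 2 * X 1) ∈
      Submodule.span ℤ (Set.range fun k => Ideal.Quotient.mk I3 (schubert3 k)) := by
  have hf : ∀ k : Fin 6, Ideal.Quotient.mk I3 (schubert3 k) ∈
      Submodule.span ℤ (Set.range fun k => Ideal.Quotient.mk I3 (schubert3 k)) :=
    fun k => Submodule.subset_span ⟨k, rfl⟩
  rw [qeq _ (-(X 0 ^ 2)) (X 0 + X 1) (-1) 0 (by simp only [s3_0, s3_1, s3_2, s3_3, s3_4, s3_5]; ring)]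
  rw [map_neg]; exact neg_mem (hf 3)

lemma q31 :
    Ideal.Quotient.mk I3 (schubert3 3 * X 1) ∈
      Submodule.span ℤ (Set.range fun k => Ideal.Quotient.mk I3 (schubert3 k)) := by
  have hf : ∀ k : Fin 6, Ideal.Quotient.mk I3 (schubert3 k) ∈
      Submodule.span ℤ (Set.range fun k => Ideal.Quotient.mk I3 (schubert3 k)) :=
    fun k => Submodule.subset_span ⟨k, rfl⟩
  rw [qeq _ (X 0 ^ 2 * X 1) 0 0 0 (by simp only [s3_0, s3_1, s3_2, s3_3, s3_4, s3_5]; ring)]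
  exact hf 5

lemma q41 :
    Ideal.Quotient.mk I3 (schubert3 4 * X 1) ∈
      Submodule.span ℤ (Set.range fun k => Ideal.Quotient.mk I3 (schubert3 k)) := by
  have hf : ∀ k : Fin 6, Ideal.Quotient.mk I3 (schubert3 k) ∈
      Submodule.span ℤ (Set.range fun k => Ideal.Quotient.mk I3 (schubert3 k)) :=
    fun k => Submodule.subset_span ⟨k, rfl⟩
  rw [qeq _ (-(X 0 ^ 2 * X 1)) (X 0 * X 1) 0 (-1) (by simp only [s3_0, s3_1, s3_2, s3_3, s3_4, s3_5]; ring)]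
  rw [map_neg]; exact neg_mem (hf 5)

lemma q51 :
    Ideal.Quotient.mk I3 (schubert3 5 * X 1) ∈
      Submodule.span ℤ (Set.range fun k => Ideal.Quotient.mk I3 (schubert3 k)) := by
  have hf : ∀ k : Fin 6, Ideal.Quotient.mk I3 (schubert3 k) ∈
      Submodule.span ℤ (Set.range fun k => Ideal.Quotient.mk I3 (schubert3 k)) :=
    fun k => Submodule.subset_span ⟨k, rfl⟩
  rw [qeq _ 0 0 (X 0 * X 1) (-(X 0 + X 1)) (by simp only [s3_0, s3_1, s3_2, s3_3, s3_4, s3_5]; ring)]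
  rw [map_zero]; exact zero_mem _

lemma q02 :
    Ideal.Quotient.mk I3 (schubert3 0 * X 2) ∈
      Submodule.span ℤ (Set.range fun k => Ideal.Quotient.mk I3 (schubert3 k)) := by
  have hf : ∀ k : Fin 6, Ideal.Quotient.mk I3 (schubert3 k) ∈
      Submodule.span ℤ (Set.range fun k => Ideal.Quotient.mk I3 (schubert3 k)) :=
    fun k => Submodule.subset_span ⟨k, rfl⟩
  rw [qeq _ (-(X 0 + X 1)) 1 0 0 (by simp only [s3_0, s3_1, s3_2, s3_3, s3_4, s3_5]; ring)]
  rw [map_neg]; exact neg_mem (hf 2)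

lemma q12 :
    Ideal.Quotient.mk I3 (schubert3 1 * X 2) ∈
      Submodule.span ℤ (Set.range fun k => Ideal.Quotient.mk I3 (schubert3 k)) := by
  have hf : ∀ k : Fin 6, Ideal.Quotient.mk I3 (schubert3 k) ∈
      Submodule.span ℤ (Set.range fun k => Ideal.Quotient.mk I3 (schubert3 k)) :=
    fun k => Submodule.subset_span ⟨k, rfl⟩
  rw [qeq _ (-(X 0 ^ 2 + X 0 * X 1)) (X 0) 0 0 (by simp only [s3_0, s3_1, s3_2, s3_3, s3_4, s3_5]; ring)]
  rw [map_neg, map_add]; exact neg_mem (add_mem (hf 3) (hf 4))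

lemma q22 :
    Ideal.Quotient.mk I3 (schubert3 2 * X 2) ∈
      Submodule.span ℤ (Set.range fun k => Ideal.Quotient.mk I3 (schubert3 k)) := by
  have hf : ∀ k : Fin 6, Ideal.Quotient.mk I3 (schubert3 k) ∈
      Submodule.span ℤ (Set.range fun k => Ideal.Quotient.mk I3 (schubert3 k)) :=
    fun k => Submodule.subset_span ⟨k, rfl⟩
  rw [qeq _ (-(X 0 * X 1)) 0 1 0 (by simp only [s3_0, s3_1, s3_2, s3_3, s3_4, s3_5]; ring)]
  rw [map_neg]; exact neg_mem (hf 4)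

lemma q32 :
    Ideal.Quotient.mk I3 (schubert3 3 * X 2) ∈
      Submodule.span ℤ (Set.range fun k => Ideal.Quotient.mk I3 (schubert3 k)) := by
  have hf : ∀ k : Fin 6, Ideal.Quotient.mk I3 (schubert3 k) ∈
      Submodule.span ℤ (Set.range fun k => Ideal.Quotient.mk I3 (schubert3 k)) :=
    fun k => Submodule.subset_span ⟨k, rfl⟩
  rw [qeq _ (-(X 0 ^ 2 * X 1)) 0 (X 0) (-1) (by simp only [s3_0, s3_1, s3_2, s3_3, s3_4, s3_5]; ring)]
  rw [map_neg]; exact neg_mem (hf 5)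

lemma q42 :
    Ideal.Quotient.mk I3 (schubert3 4 * X 2) ∈
      Submodule.span ℤ (Set.range fun k => Ideal.Quotient.mk I3 (schubert3 k)) := by
  have hf : ∀ k : Fin 6, Ideal.Quotient.mk I3 (schubert3 k) ∈
      Submodule.span ℤ (Set.range fun k => Ideal.Quotient.mk I3 (schubert3 k)) :=
    fun k => Submodule.subset_span ⟨k, rfl⟩
  rw [qeq _ 0 0 0 1 (by simp only [s3_0, s3_1, s3_2, s3_3, s3_4, s3_5]; ring)]
  rw [map_zero]; exact zero_mem _

lemma q52 :
    Ideal.Quotient.mk I3 (schubert3 5 * X 2) ∈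
      Submodule.span ℤ (Set.range fun k => Ideal.Quotient.mk I3 (schubert3 k)) := by
  have hf : ∀ k : Fin 6, Ideal.Quotient.mk I3 (schubert3 k) ∈
      Submodule.span ℤ (Set.range fun k => Ideal.Quotient.mk I3 (schubert3 k)) :=
    fun k => Submodule.subset_span ⟨k, rfl⟩
  rw [qeq _ 0 0 0 (X 0) (by simp only [s3_0, s3_1, s3_2, s3_3, s3_4, s3_5]; ring)]
  rw [map_zero]; exact zero_mem _

lemma span_mulX (i : Fin 3) (j : Fin 6) :
    Ideal.Quotient.mk I3 (schubert3 j * X i) ∈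
      Submodule.span ℤ (Set.range fun k => Ideal.Quotient.mk I3 (schubert3 k)) := by
  fin_cases i <;> fin_cases j
  exacts [q00, q10, q20, q30, q40, q50, q01, q11, q21, q31, q41, q51, q02, q12, q22, q32, q42, q52]

lemma span_top :
    Submodule.span ℤ (Set.range fun i => Ideal.Quotient.mk I3 (schubert3 i)) = ⊤ := by
  set S := Submodule.span ℤ (Set.range fun i => Ideal.Quotient.mk I3 (schubert3 i)) with hS
  rw [eq_top_iff]
  rintro z -
  obtain ⟨p, rfl⟩ := Ideal.Quotient.mk_surjective z
  induction p using MvPolynomial.induction_on with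
  | C a =>
      have hC : (C a : MvPolynomial (Fin 3) ℤ) = a • (1 : MvPolynomial (Fin 3) ℤ) := by
        rw [zsmul_eq_mul, mul_one]
        simp
      rw [hC, map_zsmul]
      exact Submodule.smul_mem S a
        (Submodule.subset_span ⟨0, by simp [schubert3]⟩)
  | add p q hp hq => rw [map_add]; exact add_mem hp hq
  | mul_X p n hp =>
      rw [map_mul]
      refine Submodule.span_induction
        (p := fun z _ => z * Ideal.Quotient.mk I3 (X n) ∈ S) ?_ ?_ ?_ ?_ hp
      · rintro _ ⟨j, rfl⟩
        show Ideal.Quotient.mk I3 (schubert3 j) * Ideal.Quotient.mk I3 (X n) ∈ S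
        rw [← map_mul]
        exact span_mulX n j
      · show (0 : MvPolynomial (Fin 3) ℤ ⧸ I3) * Ideal.Quotient.mk I3 (X n) ∈ S
        rw [zero_mul]; exact zero_mem S
      · intro a b _ _ ha hb
        show (a + b) * Ideal.Quotient.mk I3 (X n) ∈ S
        rw [add_mul]; exact add_mem ha hb
      · intro c a _ ha
        show (c • a) * Ideal.Quotient.mk I3 (X n) ∈ S
        rw [smul_mul_assoc]; exact Submodule.smul_mem S c ha

/-- The images of the six Schubert polynomials in `ℤ[x_1,x_2,x_3]/I_3` form a `ℤ`-basis:
they are linearly independent and span the quotient. -/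
theorem schubert_basis_S3 :
    LinearIndependent ℤ (fun i => Ideal.Quotient.mk I3 (schubert3 i)) ∧
    Submodule.span ℤ (Set.range fun i => Ideal.Quotient.mk I3 (schubert3 i)) = ⊤ := by
  constructor
  · have hker' : ∀ a ∈ I3, phi.toRingHom a = 0 := phi_ker
    let ψ := Ideal.Quotient.lift I3 phi.toRingHom hker'
    refine LinearIndependent.of_comp ψ.toIntAlgHom.toLinearMap ?_
    have heq : (ψ.toIntAlgHom.toLinearMap ∘ fun i => Ideal.Quotient.mk I3 (schubert3 i))
        = fun j => phi (schubert3 j) := by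
      funext j
      simp [ψ, Ideal.Quotient.lift_mk]
    rw [heq]
    exact indep_phi
  · exact span_top
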